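/- Let (T₁, T₂) be a pair of commuting contractions on H satisfying the Szegő positivity condition I − T₁T₁* − T₂T₂* + T₁T₂T₂*T₁* ≥ 0, and let j, k ≥ 1. Set T₃ = T₁ʲT₂ᵏ, G₁ = I − T₁ʲT₁*ʲ, and G₂ = T₁ʲ(I − T₂ᵏT₂*ᵏ)T₁*ʲ. Then (i) G₁ ≥ 0 and G₂ ≥ 0; (ii) I − T₃T₃* = G₁ + G₂; (iii) G₁ − T₂G₁T₂* ≥ 0; (iv) G₂ − T₁G₂T₁* ≥ 0. -/

import Mathlib

set_option maxHeartbeats 1000000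

open ContinuousLinearMap

section Aux

variable {H : Type*} [NormedAddCommGroup H] [InnerProductSpace ℂ H] [CompleteSpace H]

set_option maxHeartbeats 1000000

private lemma my_adjoint_one :
    adjoint (1 : H →L[ℂ] H) = 1 := by
  rw [ContinuousLinearMap.one_def]
  exact adjoint_id

private lemma adjoint_mul' (A B : H →L[ℂ] H) :
    adjoint (A * B) = adjoint B * adjoint A := adjoint_comp A B

private lemma my_pos_one_sub (T : H →L[ℂ] H) (hT : ‖T‖ ≤ 1) :
    ((1 : H →L[ℂ] H) - T * adjoint T).IsPositive := by
  constructor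
  · have : adjoint ((1 : H →L[ℂ] H) - T * adjoint T) = 1 - T * adjoint T := by
      rw [map_sub, adjoint_mul', adjoint_adjoint, my_adjoint_one]
    exact isSelfAdjoint_iff_isSymmetric.mp this
  · intro x
    have h1 : ((1 : H →L[ℂ] H) - T * adjoint T) x = x - T (adjoint T x) := rfl
    rw [reApplyInnerSelf_apply, h1]
    have h2 : (inner ℂ (x - T (adjoint T x)) x : ℂ)
        = (inner ℂ x x : ℂ) - inner ℂ (adjoint T x) (adjoint T x) := by
      rw [inner_sub_left]
      congr 1
      nth_rewrite 1 [← adjoint_adjoint T]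
      exact adjoint_inner_left (adjoint T) x (adjoint T x)
    rw [h2, map_sub]
    rw [inner_self_eq_norm_sq (𝕜 := ℂ) x, inner_self_eq_norm_sq (𝕜 := ℂ) (adjoint T x)]
    have h3 : ‖adjoint T x‖ ≤ ‖x‖ := by
      calc ‖adjoint T x‖ ≤ ‖adjoint T‖ * ‖x‖ := le_opNorm _ _
        _ ≤ 1 * ‖x‖ := by
            apply mul_le_mul_of_nonneg_right _ (norm_nonneg x)
            rw [LinearIsometryEquiv.norm_map adjoint T]
            exact hT
        _ = ‖x‖ := one_mul _
    nlinarith [norm_nonneg (adjoint T x), norm_nonneg x]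

/-- Swap lemma: conjugations by commuting operators commute. -/
private lemma swap_conj {a b s v : H →L[ℂ] H} (h1 : s * a = a * s) (h2 : b * v = v * b)
    (X : H →L[ℂ] H) : s * (a * X * b) * v = a * (s * X * v) * b := by
  calc s * (a * X * b) * v = (s * a) * X * (b * v) := by noncomm_ring
    _ = (a * s) * X * (v * b) := by rw [h1, h2]
    _ = a * (s * X * v) * b := by noncomm_ring

private lemma conj_pos {P : H →L[ℂ] H} (hP : P.IsPositive) (A : H →L[ℂ] H) :
    (A * P * adjoint A).IsPositive := by
  have := hP.conj_adjoint A
  simpa only [mul_def, comp_assoc] using this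

/-- Main induction: if `(1 - T T*) - S (1 - T T*) S* ≥ 0` and `T S = S T`, then
`(1 - Tⁿ T*ⁿ) - S (1 - Tⁿ T*ⁿ) S* ≥ 0`. -/
private lemma aux_pow (T S : H →L[ℂ] H) (hc : T * S = S * T)
    (hD : (((1 : H →L[ℂ] H) - T * adjoint T)
        - S * ((1 : H →L[ℂ] H) - T * adjoint T) * adjoint S).IsPositive) (n : ℕ) :
    (((1 : H →L[ℂ] H) - T ^ n * adjoint (T ^ n))
        - S * (((1 : H →L[ℂ] H) - T ^ n * adjoint (T ^ n))) * adjoint S).IsPositive := by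
  induction n with
  | zero =>
      simp only [pow_zero, my_adjoint_one, mul_one, sub_self, mul_zero, zero_mul, sub_zero]
      exact isPositive_zero
  | succ n ih =>
      have hsa' : S * T ^ n = T ^ n * S := (Commute.pow_right (hc.symm) n)
      have hbv' : adjoint (T ^ n) * adjoint S = adjoint S * adjoint (T ^ n) := by
        have := congrArg adjoint hsa'
        rw [adjoint_mul', adjoint_mul'] at this
        exact this
      have hswap : S * (T ^ n * ((1 : H →L[ℂ] H) - T * adjoint T) * adjoint (T ^ n)) * adjoint S
          = T ^ n * (S * ((1 : H →L[ℂ] H) - T * adjoint T) * adjoint S) * adjoint (T ^ n) :=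
        swap_conj hsa' hbv' _
      have key : ((1 : H →L[ℂ] H) - T ^ (n + 1) * adjoint (T ^ (n + 1)))
            - S * (((1 : H →L[ℂ] H) - T ^ (n + 1) * adjoint (T ^ (n + 1)))) * adjoint S
          = (((1 : H →L[ℂ] H) - T ^ n * adjoint (T ^ n))
              - S * (((1 : H →L[ℂ] H) - T ^ n * adjoint (T ^ n))) * adjoint S)
            + T ^ n * (((1 : H →L[ℂ] H) - T * adjoint T)
              - S * ((1 : H →L[ℂ] H) - T * adjoint T) * adjoint S) * adjoint (T ^ n) := by
        rw [pow_succ, adjoint_mul']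
        calc ((1 : H →L[ℂ] H) - T ^ n * T * (adjoint T * adjoint (T ^ n)))
              - S * (((1 : H →L[ℂ] H) - T ^ n * T * (adjoint T * adjoint (T ^ n)))) * adjoint S
            = (((1 : H →L[ℂ] H) - T ^ n * adjoint (T ^ n))
                - S * (((1 : H →L[ℂ] H) - T ^ n * adjoint (T ^ n))) * adjoint S)
              + (T ^ n * (((1 : H →L[ℂ] H) - T * adjoint T)) * adjoint (T ^ n)
                - S * (T ^ n * (((1 : H →L[ℂ] H) - T * adjoint T)) * adjoint (T ^ n)) * adjoint S)
              := by noncomm_ring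
          _ = _ := by rw [hswap]; noncomm_ring
      rw [key]
      exact ih.add (conj_pos hD (T ^ n))

end Aux

/-- Let `(T₁, T₂)` be a commuting pair of contractions satisfying Szegő positivity,
`j, k ≥ 1`, `T₃ = T₁ʲT₂ᵏ`, `G₁ = I − T₁ʲT₁*ʲ` and `G₂ = T₁ʲ(I − T₂ᵏT₂*ᵏ)T₁*ʲ`.
Then `G₁, G₂ ≥ 0`, `I − T₃T₃* = G₁ + G₂`, `G₁ − T₂G₁T₂* ≥ 0` and `G₂ − T₁G₂T₁* ≥ 0`.
(So `(T₁, T₂, T₁ʲT₂ᵏ)` belongs to the class `P₃(H)`.) -/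
theorem szego_pair_product_in_P3
    {H : Type*} [NormedAddCommGroup H] [InnerProductSpace ℂ H] [CompleteSpace H]
    (T₁ T₂ : H →L[ℂ] H) (hcomm : T₁ * T₂ = T₂ * T₁)
    (hT₁ : ‖T₁‖ ≤ 1) (hT₂ : ‖T₂‖ ≤ 1)
    (hszego : ((1 : H →L[ℂ] H) - T₁ * adjoint T₁ - T₂ * adjoint T₂
        + T₁ * T₂ * adjoint T₂ * adjoint T₁).IsPositive)
    (j k : ℕ) (hj : 1 ≤ j) (hk : 1 ≤ k) :
    (((1 : H →L[ℂ] H) - T₁ ^ j * adjoint (T₁ ^ j)).IsPositive ∧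
      (T₁ ^ j * ((1 : H →L[ℂ] H) - T₂ ^ k * adjoint (T₂ ^ k)) * adjoint (T₁ ^ j)).IsPositive) ∧
    ((1 : H →L[ℂ] H) - (T₁ ^ j * T₂ ^ k) * adjoint (T₁ ^ j * T₂ ^ k)
        = ((1 : H →L[ℂ] H) - T₁ ^ j * adjoint (T₁ ^ j))
          + T₁ ^ j * ((1 : H →L[ℂ] H) - T₂ ^ k * adjoint (T₂ ^ k)) * adjoint (T₁ ^ j)) ∧
    (((1 : H →L[ℂ] H) - T₁ ^ j * adjoint (T₁ ^ j))
        - T₂ * ((1 : H →L[ℂ] H) - T₁ ^ j * adjoint (T₁ ^ j)) * adjoint T₂).IsPositive ∧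
    ((T₁ ^ j * ((1 : H →L[ℂ] H) - T₂ ^ k * adjoint (T₂ ^ k)) * adjoint (T₁ ^ j))
        - T₁ * (T₁ ^ j * ((1 : H →L[ℂ] H) - T₂ ^ k * adjoint (T₂ ^ k)) * adjoint (T₁ ^ j))
          * adjoint T₁).IsPositive := by
  have hnorm1 : ‖T₁ ^ j‖ ≤ 1 := by
    calc ‖T₁ ^ j‖ ≤ ‖T₁‖ ^ j := norm_pow_le' T₁ (Nat.lt_of_lt_of_le Nat.zero_lt_one hj)
      _ ≤ 1 := pow_le_one₀ (norm_nonneg T₁) hT₁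
  have hnorm2 : ‖T₂ ^ k‖ ≤ 1 := by
    calc ‖T₂ ^ k‖ ≤ ‖T₂‖ ^ k := norm_pow_le' T₂ (Nat.lt_of_lt_of_le Nat.zero_lt_one hk)
      _ ≤ 1 := pow_le_one₀ (norm_nonneg T₂) hT₂
  have hG1 : ((1 : H →L[ℂ] H) - T₁ ^ j * adjoint (T₁ ^ j)).IsPositive :=
    my_pos_one_sub _ hnorm1
  have hG2 : (T₁ ^ j * ((1 : H →L[ℂ] H) - T₂ ^ k * adjoint (T₂ ^ k))
      * adjoint (T₁ ^ j)).IsPositive :=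
    conj_pos (my_pos_one_sub _ hnorm2) (T₁ ^ j)
  -- adjoint commutation
  have hadj : adjoint T₂ * adjoint T₁ = adjoint T₁ * adjoint T₂ := by
    have := congrArg adjoint hcomm
    rw [adjoint_mul', adjoint_mul'] at this
    exact this
  -- Szegő operator as D₂ = (1 - T₂T₂*) - T₁(1 - T₂T₂*)T₁*
  have hD2 : (((1 : H →L[ℂ] H) - T₂ * adjoint T₂)
      - T₁ * ((1 : H →L[ℂ] H) - T₂ * adjoint T₂) * adjoint T₁).IsPositive := by
    have heq : ((1 : H →L[ℂ] H) - T₂ * adjoint T₂)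
        - T₁ * ((1 : H →L[ℂ] H) - T₂ * adjoint T₂) * adjoint T₁
        = (1 : H →L[ℂ] H) - T₁ * adjoint T₁ - T₂ * adjoint T₂
          + T₁ * T₂ * adjoint T₂ * adjoint T₁ := by noncomm_ring
    rw [heq]; exact hszego
  -- Szegő operator as D₁ = (1 - T₁T₁*) - T₂(1 - T₁T₁*)T₂*
  have hD1 : (((1 : H →L[ℂ] H) - T₁ * adjoint T₁)
      - T₂ * ((1 : H →L[ℂ] H) - T₁ * adjoint T₁) * adjoint T₂).IsPositive := by
    have h1 : T₂ * (T₁ * adjoint T₁) * adjoint T₂ = T₁ * T₂ * adjoint T₂ * adjoint T₁ := by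
      calc T₂ * (T₁ * adjoint T₁) * adjoint T₂
          = (T₂ * T₁) * (adjoint T₁ * adjoint T₂) := by noncomm_ring
        _ = (T₁ * T₂) * (adjoint T₂ * adjoint T₁) := by rw [← hcomm, hadj]
        _ = T₁ * T₂ * adjoint T₂ * adjoint T₁ := by noncomm_ring
    have heq : ((1 : H →L[ℂ] H) - T₁ * adjoint T₁)
        - T₂ * ((1 : H →L[ℂ] H) - T₁ * adjoint T₁) * adjoint T₂
        = (1 : H →L[ℂ] H) - T₁ * adjoint T₁ - T₂ * adjoint T₂
          + T₂ * (T₁ * adjoint T₁) * adjoint T₂ := by noncomm_ring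
    rw [heq, h1]; exact hszego
  refine ⟨⟨hG1, hG2⟩, ?_, ?_, ?_⟩
  · rw [adjoint_mul']; noncomm_ring
  · exact aux_pow T₁ T₂ hcomm hD1 j
  · -- part (iv)
    have hBk : (((1 : H →L[ℂ] H) - T₂ ^ k * adjoint (T₂ ^ k))
        - T₁ * ((1 : H →L[ℂ] H) - T₂ ^ k * adjoint (T₂ ^ k)) * adjoint T₁).IsPositive :=
      aux_pow T₂ T₁ hcomm.symm hD2 k
    have hsa : T₁ * T₁ ^ j = T₁ ^ j * T₁ := (Commute.pow_right (Commute.refl T₁) j)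
    have hbv : adjoint (T₁ ^ j) * adjoint T₁ = adjoint T₁ * adjoint (T₁ ^ j) := by
      have := congrArg adjoint hsa
      rw [adjoint_mul', adjoint_mul'] at this
      exact this
    have hswap : T₁ * (T₁ ^ j * ((1 : H →L[ℂ] H) - T₂ ^ k * adjoint (T₂ ^ k))
          * adjoint (T₁ ^ j)) * adjoint T₁
        = T₁ ^ j * (T₁ * ((1 : H →L[ℂ] H) - T₂ ^ k * adjoint (T₂ ^ k)) * adjoint T₁)
          * adjoint (T₁ ^ j) := swap_conj hsa hbv _
    have key : (T₁ ^ j * ((1 : H →L[ℂ] H) - T₂ ^ k * adjoint (T₂ ^ k)) * adjoint (T₁ ^ j))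
        - T₁ * (T₁ ^ j * ((1 : H →L[ℂ] H) - T₂ ^ k * adjoint (T₂ ^ k)) * adjoint (T₁ ^ j))
          * adjoint T₁
        = T₁ ^ j * (((1 : H →L[ℂ] H) - T₂ ^ k * adjoint (T₂ ^ k))
            - T₁ * ((1 : H →L[ℂ] H) - T₂ ^ k * adjoint (T₂ ^ k)) * adjoint T₁)
          * adjoint (T₁ ^ j) := by
      rw [hswap]; noncomm_ring
    rw [key]
    exact conj_pos hBk (T₁ ^ j)
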